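/- Let D be a divisor of nonnegative rank on a tropical curve Γ. Then D is very ample if and only if the reduced-divisor map P ↦ D_P is injective on Γ. -/

import Mathlib

open scoped Classical

/-- A combinatorial model of a metric graph: a finite multigraph with positive
edge lengths. -/
structure GraphModel where
  V : Type
  E : Type
  [fintV : Fintype V]
  [fintE : Fintype E]
  src : E → V
  tgt : E → V
  len : E → ℝ
  len_pos : ∀ e, 0 < len e

attribute [instance] GraphModel.fintV GraphModel.fintE

/-- A (compact, connected) tropical curve: a compact connected metric space `Γ`
which is the geometric realization of a finite multigraph with positive edge
lengths, equipped with the induced path metric.  Each edge `e` is realized by a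
parametrization `edge e : [0, len e] → Γ` joining its endpoints, injective on the
interior, the interiors of distinct edges are disjoint and avoid the vertices,
the edges and vertices cover `Γ`, and the metric is the associated path metric. -/
structure TropicalCurve where
  Γ : Type
  [met : MetricSpace Γ]
  [cpt : CompactSpace Γ]
  [conn : ConnectedSpace Γ]
  G : GraphModel
  vtx : G.V → Γ
  edge : G.E → ℝ → Γ
  vtx_inj : Function.Injective vtx
  edge_src : ∀ e, edge e 0 = vtx (G.src e)
  edge_tgt : ∀ e, edge e (G.len e) = vtx (G.tgt e)
  edge_inj : ∀ e, Set.InjOn (edge e) (Set.Ioo 0 (G.len e))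
  interior_disjoint : ∀ e e' t t', t ∈ Set.Ioo 0 (G.len e) → t' ∈ Set.Ioo 0 (G.len e') →
    edge e t = edge e' t' → e = e' ∧ t = t'
  interior_not_vtx : ∀ e t v, t ∈ Set.Ioo 0 (G.len e) → edge e t ≠ vtx v
  cover : ∀ x : Γ, (∃ v, x = vtx v) ∨ ∃ e t, t ∈ Set.Ioo 0 (G.len e) ∧ x = edge e t
  path_metric : ∀ x y : Γ, dist x y = sInf { d : ℝ | ∃ (n : ℕ) (p : ℕ → Γ) (δ : ℕ → ℝ),
    p 0 = x ∧ p n = y ∧ (∀ i < n, ∃ (e : G.E) (s t : ℝ), s ∈ Set.Icc 0 (G.len e) ∧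
      t ∈ Set.Icc 0 (G.len e) ∧ p i = edge e s ∧ p (i+1) = edge e t ∧ δ i = |s - t|) ∧
    d = ∑ i ∈ Finset.range n, δ i }

attribute [instance] TropicalCurve.met TropicalCurve.cpt TropicalCurve.conn

namespace TropicalCurve

variable (C : TropicalCurve)

/-- A divisor on a tropical curve: a finitely supported function `Γ → ℤ`. -/
abbrev Divisor := C.Γ →₀ ℤ

/-- A divisor is effective if all its coefficients are nonnegative. -/
def Effective (D : Divisor C) : Prop := ∀ v, 0 ≤ D v

/-- The degree of a divisor: the sum of its coefficients. -/
def deg (D : Divisor C) : ℤ := D.sum fun _ n => n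

/-- `f` has (outgoing) slope `m` to the right of the point with parameter `t₀`
on the edge `e`. -/
def HasSlopeR (f : C.Γ → ℝ) (e : C.G.E) (t₀ : ℝ) (m : ℤ) : Prop :=
  ∃ ε > 0, t₀ + ε ≤ C.G.len e ∧ ∀ s ∈ Set.Icc t₀ (t₀ + ε),
    f (C.edge e s) = f (C.edge e t₀) + m * (s - t₀)

/-- `f` has (outgoing) slope `m` to the left of the point with parameter `t₀`
on the edge `e`. -/
def HasSlopeL (f : C.Γ → ℝ) (e : C.G.E) (t₀ : ℝ) (m : ℤ) : Prop :=
  ∃ ε > 0, 0 ≤ t₀ - ε ∧ ∀ s ∈ Set.Icc (t₀ - ε) t₀,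
    f (C.edge e s) = f (C.edge e t₀) + m * (t₀ - s)

/-- The branches (outgoing directions) at a point `x` of a tropical curve.  A
branch is encoded by an edge `e`, a parameter `t` with `edge e t = x`, and a
Boolean : `true` for the rightward direction, `false` for the leftward one. -/
def IsBranchAt (b : C.G.E × ℝ × Bool) (x : C.Γ) : Prop :=
  C.edge b.1 b.2.1 = x ∧ b.2.1 ∈ Set.Icc 0 (C.G.len b.1) ∧
    (if b.2.2 then b.2.1 < C.G.len b.1 else 0 < b.2.1)

/-- `ord_f(x) = n` : the sum of the outgoing slopes of `f` over all branches
emanating from `x` equals `n`. -/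
def HasOrderAt (f : C.Γ → ℝ) (x : C.Γ) (n : ℤ) : Prop :=
  ∃ (S : Finset (C.G.E × ℝ × Bool)) (m : C.G.E × ℝ × Bool → ℤ),
    (∀ b, b ∈ S ↔ C.IsBranchAt b x) ∧
    (∀ b ∈ S, if b.2.2 then C.HasSlopeR f b.1 b.2.1 (m b)
      else C.HasSlopeL f b.1 b.2.1 (m b)) ∧
    n = ∑ b ∈ S, m b

/-- A rational function on a tropical curve: a continuous function which is
piecewise linear with integer slopes and finitely many linear pieces on every
edge. -/
def IsRational (f : C.Γ → ℝ) : Prop :=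
  Continuous f ∧ ∀ e : C.G.E, ∃ (n : ℕ) (t : ℕ → ℝ), 0 < n ∧ t 0 = 0 ∧ t n = C.G.len e ∧
    (∀ i < n, t i < t (i+1)) ∧
    ∀ i < n, ∃ (m : ℤ) (b : ℝ), ∀ s ∈ Set.Icc (t i) (t (i+1)),
      f (C.edge e s) = m * s + b

/-- Two divisors are linearly equivalent if their difference is the divisor of a
rational function: `D - D' = div(f)`. -/
def LinEquiv (D D' : Divisor C) : Prop :=
  ∃ f : C.Γ → ℝ, C.IsRational f ∧ ∀ x, C.HasOrderAt f x (D x - D' x)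

/-- `f ∈ R(D)` : `f` is a rational function with `D + div(f) ≥ 0`. -/
def InR (D : Divisor C) (f : C.Γ → ℝ) : Prop :=
  C.IsRational f ∧ ∃ E : Divisor C, C.Effective E ∧ ∀ x, C.HasOrderAt f x (E x - D x)

/-- The branch `b` at `v` leaves the set `X`: some initial punctured segment
along `b` stays in `Γ ∖ (X ∖ {v})`. -/
def BranchLeaving (X : Set C.Γ) (v : C.Γ) (b : C.G.E × ℝ × Bool) : Prop :=
  C.IsBranchAt b v ∧
    (if b.2.2 then ∃ ε > 0, b.2.1 + ε ≤ C.G.len b.1 ∧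
        ∀ s ∈ Set.Ioc b.2.1 (b.2.1 + ε), C.edge b.1 s ∈ X → C.edge b.1 s = v
      else ∃ ε > 0, 0 ≤ b.2.1 - ε ∧
        ∀ s ∈ Set.Ico (b.2.1 - ε) b.2.1, C.edge b.1 s ∈ X → C.edge b.1 s = v)

/-- `deg_X^out(v)` : the number of edges (branch directions) leaving `X` at `v`,
i.e. the maximal number of internally disjoint segments in `Γ ∖ (X ∖ {v})` with
an end at `v`. -/
noncomputable def outDeg (X : Set C.Γ) (v : C.Γ) : ℕ :=
  {b | C.BranchLeaving X v b}.ncard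

/-- The degree (valence) of a point: the number of branches of `Γ` at `v`. -/
noncomputable def pointDeg (v : C.Γ) : ℕ := C.outDeg {v} v

/-- `D` is `v₀`-reduced: its coefficients away from `v₀` are nonnegative, and
every closed connected subset `X ⊆ Γ` avoiding `v₀` has a non-saturated boundary
point, i.e. some `v ∈ ∂X` with `D(v) < deg_X^out(v)`. -/
def IsReduced (v₀ : C.Γ) (D : Divisor C) : Prop :=
  (∀ v, v ≠ v₀ → 0 ≤ D v) ∧
  ∀ X : Set C.Γ, IsClosed X → IsConnected X → v₀ ∉ X →
    ∃ v ∈ frontier X, D v < (C.outDeg X v : ℤ)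

/-- `D` is linearly equivalent to an effective divisor. -/
def EquivEffective (D : Divisor C) : Prop :=
  ∃ E : Divisor C, C.Effective E ∧ C.LinEquiv D E

/-- The rank of a divisor: the largest `r ≥ -1` such that for every effective
divisor `E` of degree `r`, `D - E` is linearly equivalent to an effective
divisor (`-1` when `D` itself is not equivalent to an effective divisor). -/
noncomputable def rank (D : Divisor C) : ℤ :=
  sSup {r : ℤ | -1 ≤ r ∧ ∀ E : Divisor C, C.Effective E → C.deg E = r →
    C.EquivEffective (D - E)}

/-- The genus of a tropical curve: its first Betti number, computed from any
model as `#E - #V + 1`. -/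
noncomputable def genus : ℤ :=
  (Fintype.card C.G.E : ℤ) - (Fintype.card C.G.V : ℤ) + 1

/-- `D` is very ample: the rational functions in `R(D)` separate the points
of `Γ`. -/
def VeryAmple (D : Divisor C) : Prop :=
  ∀ P Q : C.Γ, P ≠ Q → ∃ f g : C.Γ → ℝ, C.InR D f ∧ C.InR D g ∧ f P - g P ≠ f Q - g Q

/-- `D` is ample: some positive integer multiple of `D` is very ample. -/
def Ample (D : Divisor C) : Prop := ∃ m : ℕ, 0 < m ∧ C.VeryAmple (m • D)

end TropicalCurve
namespace TropicalCurve

variable (C : TropicalCurve)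

lemma dist_edge_le (e : C.G.E) {s t : ℝ} (hs : s ∈ Set.Icc 0 (C.G.len e))
    (ht : t ∈ Set.Icc 0 (C.G.len e)) : dist (C.edge e s) (C.edge e t) ≤ |s - t| := by
  rw [C.path_metric]
  apply csInf_le
  · refine ⟨0, ?_⟩
    rintro d ⟨n, p, δ, hp0, hpn, hseg, rfl⟩
    apply Finset.sum_nonneg
    intro i hi
    obtain ⟨e', s', t', _, _, _, _, hδ⟩ := hseg i (Finset.mem_range.mp hi)
    rw [hδ]; positivity
  · refine ⟨1, (fun i => if i = 0 then C.edge e s else C.edge e t), (fun _ => |s - t|),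
      by simp, by simp, ?_, by simp⟩
    intro i hi
    interval_cases i
    exact ⟨e, s, t, hs, ht, by simp, by simp, rfl⟩

lemma edge_continuousOn (e : C.G.E) :
    ContinuousOn (C.edge e) (Set.Icc 0 (C.G.len e)) := by
  refine (LipschitzOnWith.of_dist_le_mul (K := 1) ?_).continuousOn
  intro s hs t ht
  rw [NNReal.coe_one, one_mul, Real.dist_eq]
  exact C.dist_edge_le e hs ht

lemma interior_param_eq (e : C.G.E) {t t' : ℝ} (ht : t ∈ Set.Ioo 0 (C.G.len e))
    (ht' : t' ∈ Set.Icc 0 (C.G.len e)) (h : C.edge e t = C.edge e t') : t = t' := by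
  rcases eq_or_lt_of_le ht'.1 with h0 | h0
  · exact absurd (h.trans (by rw [← h0, C.edge_src])) (C.interior_not_vtx e t _ ht)
  rcases eq_or_lt_of_le ht'.2 with h1 | h1
  · exact absurd (h.trans (by rw [h1, C.edge_tgt])) (C.interior_not_vtx e t _ ht)
  exact C.edge_inj e ht ⟨h0, h1⟩ h

lemma isBranchAt_param_unique {e : C.G.E} {t t' : ℝ} {d : Bool} {x : C.Γ}
    (h : C.IsBranchAt (e, t, d) x) (h' : C.IsBranchAt (e, t', d) x) : t = t' := by
  obtain ⟨hx, hIcc, hd⟩ := h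
  obtain ⟨hx', hIcc', hd'⟩ := h'
  simp only at hx hx' hIcc hIcc' hd hd'
  have hedge : C.edge e t = C.edge e t' := hx.trans hx'.symm
  by_cases hIoo : t ∈ Set.Ioo 0 (C.G.len e)
  · exact C.interior_param_eq e hIoo hIcc' hedge
  by_cases hIoo' : t' ∈ Set.Ioo 0 (C.G.len e)
  · exact (C.interior_param_eq e hIoo' hIcc hedge.symm).symm
  simp only [Set.mem_Ioo, not_and, not_lt] at hIoo hIoo'
  cases d
  · simp only [if_neg Bool.false_ne_true] at hd hd'
    have h1 : t = C.G.len e := le_antisymm hIcc.2 (hIoo hd)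
    have h2 : t' = C.G.len e := le_antisymm hIcc'.2 (hIoo' hd')
    rw [h1, h2]
  · simp only [if_pos rfl] at hd hd'
    have h1 : t = 0 := by
      rcases eq_or_lt_of_le hIcc.1 with h | h
      · exact h.symm
      · exact absurd hd (not_lt.mpr (hIoo h))
    have h2 : t' = 0 := by
      rcases eq_or_lt_of_le hIcc'.1 with h | h
      · exact h.symm
      · exact absurd hd' (not_lt.mpr (hIoo' h))
    rw [h1, h2]

lemma branchSet_finite (x : C.Γ) : {b | C.IsBranchAt b x}.Finite := by
  apply Set.Finite.of_finite_image (f := fun b => (b.1, b.2.2)) (Set.toFinite _)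
  rintro ⟨e, t, d⟩ hb ⟨e', t', d'⟩ hb' hee
  simp only [Prod.mk.injEq] at hee
  obtain ⟨rfl, rfl⟩ := hee
  have := C.isBranchAt_param_unique hb hb'
  simp [this]

end TropicalCurve
namespace TropicalCurve

variable (C : TropicalCurve)

lemma hasSlopeR_unique {f : C.Γ → ℝ} {e : C.G.E} {t : ℝ} {m m' : ℤ}
    (h : C.HasSlopeR f e t m) (h' : C.HasSlopeR f e t m') : m = m' := by
  obtain ⟨ε, hε, hle, hf⟩ := h
  obtain ⟨ε', hε', hle', hf'⟩ := h'
  have hmin : 0 < min ε ε' := lt_min hε hε'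
  have h1 := hf (t + min ε ε') ⟨by linarith, by simp [min_le_left]⟩
  have h2 := hf' (t + min ε ε') ⟨by linarith, by simp [min_le_right]⟩
  have h3 : (m : ℝ) * (min ε ε') = m' * (min ε ε') := by
    rw [h1] at h2; ring_nf at h2 ⊢; linarith
  have h4 : (m : ℝ) = m' := mul_right_cancel₀ (ne_of_gt hmin) h3
  exact_mod_cast h4

lemma hasSlopeL_unique {f : C.Γ → ℝ} {e : C.G.E} {t : ℝ} {m m' : ℤ}
    (h : C.HasSlopeL f e t m) (h' : C.HasSlopeL f e t m') : m = m' := by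
  obtain ⟨ε, hε, hle, hf⟩ := h
  obtain ⟨ε', hε', hle', hf'⟩ := h'
  have hmin : 0 < min ε ε' := lt_min hε hε'
  have h1 := hf (t - min ε ε') ⟨by have := min_le_left ε ε'; linarith, by linarith⟩
  have h2 := hf' (t - min ε ε') ⟨by have := min_le_right ε ε'; linarith, by linarith⟩
  have h3 : (m : ℝ) * (min ε ε') = m' * (min ε ε') := by
    rw [h1] at h2; ring_nf at h2 ⊢; linarith
  have h4 : (m : ℝ) = m' := mul_right_cancel₀ (ne_of_gt hmin) h3
  exact_mod_cast h4

lemma hasSlopeR_sub {f g : C.Γ → ℝ} {e : C.G.E} {t : ℝ} {mf mg : ℤ}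
    (hf : C.HasSlopeR f e t mf) (hg : C.HasSlopeR g e t mg) :
    C.HasSlopeR (fun y => f y - g y) e t (mf - mg) := by
  obtain ⟨ε, hε, hle, hfε⟩ := hf
  obtain ⟨ε', hε', hle', hgε⟩ := hg
  refine ⟨min ε ε', lt_min hε hε', by
    have := min_le_left ε ε'; linarith, fun s hs => ?_⟩
  have h1 := hfε s ⟨hs.1, hs.2.trans (by have := min_le_left ε ε'; linarith)⟩
  have h2 := hgε s ⟨hs.1, hs.2.trans (by have := min_le_right ε ε'; linarith)⟩
  simp only [h1, h2]
  push_cast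
  ring

lemma hasSlopeL_sub {f g : C.Γ → ℝ} {e : C.G.E} {t : ℝ} {mf mg : ℤ}
    (hf : C.HasSlopeL f e t mf) (hg : C.HasSlopeL g e t mg) :
    C.HasSlopeL (fun y => f y - g y) e t (mf - mg) := by
  obtain ⟨ε, hε, hle, hfε⟩ := hf
  obtain ⟨ε', hε', hle', hgε⟩ := hg
  refine ⟨min ε ε', lt_min hε hε', by
    have := min_le_left ε ε'; linarith, fun s hs => ?_⟩
  have h1 := hfε s ⟨le_trans (by have := min_le_left ε ε'; linarith) hs.1, hs.2⟩
  have h2 := hgε s ⟨le_trans (by have := min_le_right ε ε'; linarith) hs.1, hs.2⟩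
  simp only [h1, h2]
  push_cast
  ring

lemma hasOrderAt_unique {f : C.Γ → ℝ} {x : C.Γ} {n n' : ℤ}
    (h : C.HasOrderAt f x n) (h' : C.HasOrderAt f x n') : n = n' := by
  obtain ⟨S, m, hS, hm, rfl⟩ := h
  obtain ⟨S', m', hS', hm', rfl⟩ := h'
  have hSS : S' = S := Finset.ext fun b => (hS' b).trans (hS b).symm
  subst hSS
  apply Finset.sum_congr rfl
  intro b hb
  have h1 := hm b hb
  have h2 := hm' b hb
  rcases b with ⟨e, t, d⟩
  cases d
  · simp only [if_neg Bool.false_ne_true] at h1 h2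
    exact C.hasSlopeL_unique h1 h2
  · simp only [if_pos rfl] at h1 h2
    exact C.hasSlopeR_unique h1 h2

lemma hasOrderAt_sub {f g : C.Γ → ℝ} {x : C.Γ} {nf ng : ℤ}
    (hf : C.HasOrderAt f x nf) (hg : C.HasOrderAt g x ng) :
    C.HasOrderAt (fun y => f y - g y) x (nf - ng) := by
  obtain ⟨S, m, hS, hm, rfl⟩ := hf
  obtain ⟨S', m', hS', hm', rfl⟩ := hg
  have hSS : S' = S := Finset.ext fun b => (hS' b).trans (hS b).symm
  subst hSS
  refine ⟨S', fun b => m b - m' b, hS, ?_, (Finset.sum_sub_distrib _ _).symm⟩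
  intro b hb
  have h1 := hm b hb
  have h2 := hm' b hb
  rcases b with ⟨e, t, d⟩
  cases d
  · simp only [if_neg Bool.false_ne_true] at h1 h2 ⊢
    exact C.hasSlopeL_sub h1 h2
  · simp only [if_pos rfl] at h1 h2 ⊢
    exact C.hasSlopeR_sub h1 h2

lemma hasOrderAt_of_const {f : C.Γ → ℝ} {c : ℝ} (hc : ∀ y, f y = c) (x : C.Γ) :
    C.HasOrderAt f x 0 := by
  refine ⟨(C.branchSet_finite x).toFinset, fun _ => 0, fun b => Set.Finite.mem_toFinset _, ?_,
    by simp⟩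
  rintro ⟨e, t, d⟩ hb
  rw [Set.Finite.mem_toFinset] at hb
  have hIcc : t ∈ Set.Icc 0 (C.G.len e) := hb.2.1
  cases d
  · have hd : 0 < t := by simpa using hb.2.2
    rw [if_neg (by simp)]
    show C.HasSlopeL f e t 0
    exact ⟨t, hd, by linarith, fun s hs => by simp [hc]⟩
  · have hd : t < C.G.len e := by simpa using hb.2.2
    rw [if_pos (by simp)]
    show C.HasSlopeR f e t 0
    exact ⟨C.G.len e - t, by linarith, by linarith, fun s hs => by simp [hc]⟩

end TropicalCurve
namespace TropicalCurve

variable (C : TropicalCurve)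

lemma maxPrinciple {v₀ : C.Γ} {D E : Divisor C} (hred : C.IsReduced v₀ D)
    (hE : C.Effective E) {φ : C.Γ → ℝ} (hφc : Continuous φ)
    (hord : ∀ x, C.HasOrderAt φ x (E x - D x)) : ∀ x, φ x ≤ φ v₀ := by
  obtain ⟨w, -, hw⟩ := isCompact_univ.exists_isMaxOn Set.univ_nonempty hφc.continuousOn
  have hwmax : ∀ y, φ y ≤ φ w := fun y => hw (Set.mem_univ y)
  by_cases hv₀ : φ v₀ = φ w
  · intro x; rw [hv₀]; exact hwmax x
  exfalso
  set X : Set C.Γ := φ ⁻¹' {φ w} with hXdef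
  have hXcl : IsClosed X := isClosed_singleton.preimage hφc
  have hwX : w ∈ X := rfl
  set X' : Set C.Γ := connectedComponentIn X w with hX'def
  have hwX' : w ∈ X' := mem_connectedComponentIn hwX
  have hsub : X' ⊆ X := connectedComponentIn_subset _ _
  have hX'cl : IsClosed X' := by
    apply isClosed_of_closure_subset
    exact isPreconnected_connectedComponentIn.closure.subset_connectedComponentIn
      (subset_closure hwX') (hXcl.closure_subset_iff.mpr hsub)
  have hX'conn : IsConnected X' := ⟨⟨w, hwX'⟩, isPreconnected_connectedComponentIn⟩
  have hv₀X' : v₀ ∉ X' := fun h => hv₀ (hsub h)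
  obtain ⟨v, hvfr, hvD⟩ := hred.2 X' hX'cl hX'conn hv₀X'
  have hvX' : v ∈ X' := hX'cl.frontier_subset hvfr
  have hvM : φ v = φ w := hsub hvX'
  have hcc : ∀ K : Set C.Γ, IsPreconnected K → v ∈ K → K ⊆ X → K ⊆ X' := by
    intro K hK hvK hKX
    have h1 := hK.subset_connectedComponentIn hvK hKX
    rwa [← connectedComponentIn_eq hvX'] at h1
  obtain ⟨S, m, hS, hm, hn⟩ := hord v
  classical
  have hm0 : ∀ b ∈ S, m b ≤ 0 := by
    intro b hb
    have hbr := (hS b).mp hb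
    rcases b with ⟨e, t, d⟩
    have hv : C.edge e t = v := hbr.1
    have hIcc : t ∈ Set.Icc 0 (C.G.len e) := hbr.2.1
    cases d
    · have hsl : C.HasSlopeL φ e t (m (e, t, false)) := by simpa using hm _ hb
      obtain ⟨ε, hε, h0, hf⟩ := hsl
      have h1 := hf (t - ε) ⟨le_refl _, by linarith⟩
      have h2 : φ (C.edge e (t - ε)) ≤ φ w := hwmax _
      rw [h1, hv, hvM] at h2
      by_contra hcon
      push_neg at hcon
      have hc1 : (1 : ℝ) ≤ (m (e, t, false) : ℝ) := by exact_mod_cast hcon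
      nlinarith
    · have hsl : C.HasSlopeR φ e t (m (e, t, true)) := by simpa using hm _ hb
      obtain ⟨ε, hε, h0, hf⟩ := hsl
      have h1 := hf (t + ε) ⟨by linarith, le_refl _⟩
      have h2 : φ (C.edge e (t + ε)) ≤ φ w := hwmax _
      rw [h1, hv, hvM] at h2
      by_contra hcon
      push_neg at hcon
      have hc1 : (1 : ℝ) ≤ (m (e, t, true) : ℝ) := by exact_mod_cast hcon
      nlinarith
  have hm1 : ∀ b ∈ S, C.BranchLeaving X' v b → m b ≤ -1 := by
    intro b hb hPb
    have hbr := (hS b).mp hb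
    by_contra hcon
    push_neg at hcon
    have hm0b := hm0 b hb
    have hmz : m b = 0 := by omega
    rcases b with ⟨e, t, d⟩
    have hv : C.edge e t = v := hbr.1
    have hIcc : t ∈ Set.Icc 0 (C.G.len e) := hbr.2.1
    obtain ⟨-, hlv⟩ := hPb
    cases d
    · -- leftward branch
      have hsl0 : C.HasSlopeL φ e t (m (e, t, false)) := by simpa using hm _ hb
      rw [hmz] at hsl0
      obtain ⟨ε₁, hε₁, h01, hf1⟩ := hsl0
      have hlv2 : ∃ ε > 0, 0 ≤ t - ε ∧
          ∀ s ∈ Set.Ico (t - ε) t, C.edge e s ∈ X' → C.edge e s = v := by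
        simpa using hlv
      obtain ⟨ε₂, hε₂, h02, hf2⟩ := hlv2
      have ht0 : 0 < t := by simpa using hbr.2.2
      have hminpos : 0 < min ε₁ ε₂ := lt_min hε₁ hε₂
      have hsubI : Set.Icc (t - min ε₁ ε₂) t ⊆ Set.Icc 0 (C.G.len e) := by
        intro s hs
        have h := min_le_left ε₁ ε₂
        exact ⟨by have := hs.1; linarith, le_trans hs.2 hIcc.2⟩
      have hKconn : IsPreconnected (C.edge e '' Set.Icc (t - min ε₁ ε₂) t) :=
        isPreconnected_Icc.image _ ((C.edge_continuousOn e).mono hsubI)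
      have hvK : v ∈ C.edge e '' Set.Icc (t - min ε₁ ε₂) t :=
        ⟨t, ⟨by linarith, le_refl t⟩, hv⟩
      have hKX : C.edge e '' Set.Icc (t - min ε₁ ε₂) t ⊆ X := by
        rintro - ⟨s, hs, rfl⟩
        have h1 := hf1 s ⟨by have := min_le_left ε₁ ε₂; have := hs.1; linarith, hs.2⟩
        show φ (C.edge e s) = φ w
        rw [h1, hv, hvM]
        push_cast
        ring
      have hKX' : C.edge e '' Set.Icc (t - min ε₁ ε₂) t ⊆ X' := hcc _ hKconn hvK hKX
      have hs₀1 : max (t - min ε₁ ε₂) (t / 2) < t := max_lt (by linarith) (by linarith)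
      have hs₀2 : t - min ε₁ ε₂ ≤ max (t - min ε₁ ε₂) (t / 2) := le_max_left _ _
      have hs₀3 : 0 < max (t - min ε₁ ε₂) (t / 2) :=
        lt_of_lt_of_le (by linarith : (0:ℝ) < t / 2) (le_max_right _ _)
      have hs₀4 : max (t - min ε₁ ε₂) (t / 2) < C.G.len e := lt_of_lt_of_le hs₀1 hIcc.2
      have hin : C.edge e (max (t - min ε₁ ε₂) (t / 2)) ∈ X' :=
        hKX' ⟨_, ⟨hs₀2, le_of_lt hs₀1⟩, rfl⟩
      have heq : C.edge e (max (t - min ε₁ ε₂) (t / 2)) = v :=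
        hf2 _ ⟨by have := min_le_right ε₁ ε₂; linarith, hs₀1⟩ hin
      rcases eq_or_lt_of_le hIcc.2 with hlen | hlen
      · exact C.interior_not_vtx e _ (C.G.tgt e) ⟨hs₀3, hs₀4⟩
          (heq.trans (by rw [← hv, hlen, C.edge_tgt]))
      · have := C.edge_inj e ⟨hs₀3, hs₀4⟩ ⟨ht0, hlen⟩ (heq.trans hv.symm)
        exact absurd this (ne_of_lt hs₀1)
    · -- rightward branch
      have hsl0 : C.HasSlopeR φ e t (m (e, t, true)) := by simpa using hm _ hb
      rw [hmz] at hsl0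
      obtain ⟨ε₁, hε₁, h01, hf1⟩ := hsl0
      have hlv2 : ∃ ε > 0, t + ε ≤ C.G.len e ∧
          ∀ s ∈ Set.Ioc t (t + ε), C.edge e s ∈ X' → C.edge e s = v := by
        simpa using hlv
      obtain ⟨ε₂, hε₂, h02, hf2⟩ := hlv2
      have ht1 : t < C.G.len e := by simpa using hbr.2.2
      have hminpos : 0 < min ε₁ ε₂ := lt_min hε₁ hε₂
      have hsubI : Set.Icc t (t + min ε₁ ε₂) ⊆ Set.Icc 0 (C.G.len e) := by
        intro s hs
        have h := min_le_left ε₁ ε₂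
        exact ⟨le_trans hIcc.1 hs.1, by have := hs.2; linarith⟩
      have hKconn : IsPreconnected (C.edge e '' Set.Icc t (t + min ε₁ ε₂)) :=
        isPreconnected_Icc.image _ ((C.edge_continuousOn e).mono hsubI)
      have hvK : v ∈ C.edge e '' Set.Icc t (t + min ε₁ ε₂) :=
        ⟨t, ⟨le_refl t, by linarith⟩, hv⟩
      have hKX : C.edge e '' Set.Icc t (t + min ε₁ ε₂) ⊆ X := by
        rintro - ⟨s, hs, rfl⟩
        have h1 := hf1 s ⟨hs.1, by have := min_le_left ε₁ ε₂; have := hs.2; linarith⟩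
        show φ (C.edge e s) = φ w
        rw [h1, hv, hvM]
        push_cast
        ring
      have hKX' : C.edge e '' Set.Icc t (t + min ε₁ ε₂) ⊆ X' := hcc _ hKconn hvK hKX
      have hs₀1 : t < min (t + min ε₁ ε₂) ((t + C.G.len e) / 2) :=
        lt_min (by linarith) (by linarith)
      have hs₀2 : min (t + min ε₁ ε₂) ((t + C.G.len e) / 2) ≤ t + min ε₁ ε₂ := min_le_left _ _
      have hs₀3 : 0 < min (t + min ε₁ ε₂) ((t + C.G.len e) / 2) :=
        lt_of_le_of_lt hIcc.1 hs₀1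
      have hs₀4 : min (t + min ε₁ ε₂) ((t + C.G.len e) / 2) < C.G.len e :=
        lt_of_le_of_lt (min_le_right _ _) (by linarith)
      have hin : C.edge e (min (t + min ε₁ ε₂) ((t + C.G.len e) / 2)) ∈ X' :=
        hKX' ⟨_, ⟨le_of_lt hs₀1, hs₀2⟩, rfl⟩
      have heq : C.edge e (min (t + min ε₁ ε₂) ((t + C.G.len e) / 2)) = v :=
        hf2 _ ⟨hs₀1, by have := min_le_right ε₁ ε₂; linarith⟩ hin
      rcases eq_or_lt_of_le hIcc.1 with hzer | hzer
      · exact C.interior_not_vtx e _ (C.G.src e) ⟨hs₀3, hs₀4⟩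
          (heq.trans (by rw [← hv, ← hzer, C.edge_src]))
      · have := C.edge_inj e ⟨hs₀3, hs₀4⟩ ⟨hzer, ht1⟩ (heq.trans hv.symm)
        exact absurd this (ne_of_gt hs₀1)
  -- counting
  have hLsub : ∀ b, C.BranchLeaving X' v b → b ∈ S := fun b hb => (hS b).mpr hb.1
  have hset : {b | C.BranchLeaving X' v b} =
      ↑(S.filter (fun b => C.BranchLeaving X' v b)) := by
    ext b
    simp only [Set.mem_setOf_eq, Finset.coe_filter, Set.mem_setOf_eq]
    exact ⟨fun h => ⟨hLsub b h, h⟩, fun h => h.2⟩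
  have houtdeg : (C.outDeg X' v : ℤ) =
      (((S.filter (fun b => C.BranchLeaving X' v b)).card : ℕ) : ℤ) := by
    have h : C.outDeg X' v = (S.filter (fun b => C.BranchLeaving X' v b)).card := by
      show {b | C.BranchLeaving X' v b}.ncard = _
      rw [hset, Set.ncard_coe_finset]
    exact_mod_cast h
  have hsum1 : ∑ b ∈ S, m b ≤
      ∑ b ∈ S, (if C.BranchLeaving X' v b then (-1 : ℤ) else 0) := by
    apply Finset.sum_le_sum
    intro b hb
    by_cases h : C.BranchLeaving X' v b
    · rw [if_pos h]; exact hm1 b hb h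
    · rw [if_neg h]; exact hm0 b hb
  have hsum2 : ∑ b ∈ S, (if C.BranchLeaving X' v b then (-1 : ℤ) else 0) =
      -(((S.filter (fun b => C.BranchLeaving X' v b)).card : ℕ) : ℤ) := by
    rw [← Finset.sum_filter]
    simp
  have hEv := hE v
  rw [houtdeg] at hvD
  rw [hsum2] at hsum1
  linarith [hn, hsum1, hEv, hvD]

end TropicalCurve
namespace TropicalCurve

variable (C : TropicalCurve)

lemma order_nonpos_at_max {φ : C.Γ → ℝ} {p : C.Γ} {n : ℤ}
    (hmax : ∀ y, φ y ≤ φ p) (h : C.HasOrderAt φ p n) : n ≤ 0 := by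
  obtain ⟨S, m, hS, hm, rfl⟩ := h
  apply Finset.sum_nonpos
  intro b hb
  have hbr := (hS b).mp hb
  rcases b with ⟨e, t, d⟩
  have hv : C.edge e t = p := hbr.1
  cases d
  · have hsl : C.HasSlopeL φ e t (m (e, t, false)) := by simpa using hm _ hb
    obtain ⟨ε, hε, h0, hf⟩ := hsl
    have h1 := hf (t - ε) ⟨le_refl _, by linarith⟩
    have h2 : φ (C.edge e (t - ε)) ≤ φ p := hmax _
    rw [h1, hv] at h2
    by_contra hcon
    push_neg at hcon
    have hc1 : (1 : ℝ) ≤ (m (e, t, false) : ℝ) := by exact_mod_cast hcon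
    nlinarith
  · have hsl : C.HasSlopeR φ e t (m (e, t, true)) := by simpa using hm _ hb
    obtain ⟨ε, hε, h0, hf⟩ := hsl
    have h1 := hf (t + ε) ⟨by linarith, le_refl _⟩
    have h2 : φ (C.edge e (t + ε)) ≤ φ p := hmax _
    rw [h1, hv] at h2
    by_contra hcon
    push_neg at hcon
    have hc1 : (1 : ℝ) ≤ (m (e, t, true) : ℝ) := by exact_mod_cast hcon
    nlinarith

lemma deg_nonneg_of_effective {E : Divisor C} (hE : C.Effective E) : 0 ≤ C.deg E :=
  Finset.sum_nonneg fun v _ => hE v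

lemma equivEffective_of_rank_nonneg {D : Divisor C} (hD : 0 ≤ C.rank D) :
    C.EquivEffective D := by
  classical
  set T := {r : ℤ | -1 ≤ r ∧ ∀ E : Divisor C, C.Effective E → C.deg E = r →
    C.EquivEffective (D - E)} with hT
  have hrank : C.rank D = sSup T := rfl
  have hneg1 : (-1 : ℤ) ∈ T := by
    refine ⟨le_refl _, fun E hE hdeg => absurd hdeg ?_⟩
    have := C.deg_nonneg_of_effective hE
    omega
  obtain ⟨r, hr0, hrT⟩ : ∃ r : ℤ, 0 ≤ r ∧ r ∈ T := by
    by_cases hbdd : BddAbove T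
    · exact ⟨sSup T, hrank ▸ hD, Int.csSup_mem ⟨-1, hneg1⟩ hbdd⟩
    · obtain ⟨r, hrT, hr⟩ := not_bddAbove_iff.mp hbdd 0
      exact ⟨r, le_of_lt hr, hrT⟩
  obtain ⟨p⟩ := (inferInstance : Nonempty C.Γ)
  have hEr_eff : C.Effective (Finsupp.single p r) := by
    intro v
    rw [Finsupp.single_apply]
    split <;> omega
  have hEr_deg : C.deg (Finsupp.single p r) = r := by
    rw [deg]
    exact Finsupp.sum_single_index rfl
  obtain ⟨F, hF, f, hfrat, hford⟩ := hrT.2 (Finsupp.single p r) hEr_eff hEr_deg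
  refine ⟨F + Finsupp.single p r, fun v => by
    have h1 := hF v
    have h2 := hEr_eff v
    rw [Finsupp.add_apply]
    omega, f, hfrat, fun x => ?_⟩
  have hx := hford x
  have heq : (D - Finsupp.single p r) x - F x = D x - (F + Finsupp.single p r) x := by
    rw [Finsupp.sub_apply, Finsupp.add_apply]
    ring
  rwa [heq] at hx

lemma reduced_effective {D : Divisor C} (hD : 0 ≤ C.rank D) {P : C.Γ} {DP : Divisor C}
    (hred : C.IsReduced P DP) (hequiv : C.LinEquiv DP D) : C.Effective DP := by
  obtain ⟨E₀, hE₀, f₀, hf₀rat, hf₀ord⟩ := C.equivEffective_of_rank_nonneg hD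
  obtain ⟨h₁, h₁rat, h₁ord⟩ := hequiv
  intro v
  by_cases hvP : v = P
  · subst hvP
    -- φ = (0 - h₁) - f₀, with div φ = E₀ - DP
    have hzord : ∀ x, C.HasOrderAt (fun _ => (0:ℝ)) x 0 :=
      fun x => C.hasOrderAt_of_const (fun _ => rfl) x
    have hφord : ∀ x, C.HasOrderAt (fun y => (fun y => (0:ℝ) - h₁ y) y - f₀ y) x
        ((0 - (DP x - D x)) - (D x - E₀ x)) :=
      fun x => C.hasOrderAt_sub (C.hasOrderAt_sub (hzord x) (h₁ord x)) (hf₀ord x)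
    have hφord' : ∀ x, C.HasOrderAt (fun y => (0:ℝ) - h₁ y - f₀ y) x (E₀ x - DP x) := by
      intro x
      have := hφord x
      have heq : (0 - (DP x - D x)) - (D x - E₀ x) = E₀ x - DP x := by ring
      rwa [heq] at this
    have hφc : Continuous (fun y => (0:ℝ) - h₁ y - f₀ y) :=
      (continuous_const.sub h₁rat.1).sub hf₀rat.1
    have hmax := C.maxPrinciple hred hE₀ hφc hφord'
    have hord := C.order_nonpos_at_max hmax (hφord' v)
    have := hE₀ v
    omega
  · exact hred.1 v hvP

end TropicalCurve
/-- Let `D` be a divisor of nonnegative rank on a tropical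
curve `Γ`. Then `D` is very ample if and only if the reduced-divisor map
`P ↦ D_P` is injective on `Γ`. -/
theorem veryAmple_iff_reduced_divisor_map_injective (C : TropicalCurve)
    (D : TropicalCurve.Divisor C) (hD : 0 ≤ C.rank D)
    (DP : C.Γ → TropicalCurve.Divisor C)
    (hDP : ∀ P : C.Γ, C.IsReduced P (DP P) ∧ C.LinEquiv (DP P) D) :
    C.VeryAmple D ↔ Function.Injective DP := by
  constructor
  · -- very ample → injective
    intro hva P Q hPQ
    by_contra hne
    obtain ⟨f, g, hf, hg, hsep⟩ := hva P Q hne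
    obtain ⟨h, hrat, hord⟩ := (hDP P).2
    have key : ∀ f' : C.Γ → ℝ, C.InR D f' → f' P - h P = f' Q - h Q := by
      intro f' hfR
      obtain ⟨hfrat, Ef, hEf, hford⟩ := hfR
      have hφord : ∀ x, C.HasOrderAt (fun y => f' y - h y) x (Ef x - DP P x) := by
        intro x
        have hsub := C.hasOrderAt_sub (hford x) (hord x)
        have heq : (Ef x - D x) - (DP P x - D x) = Ef x - DP P x := by ring
        rwa [heq] at hsub
      have hφc : Continuous (fun y => f' y - h y) := hfrat.1.sub hrat.1
      have hmaxP := C.maxPrinciple (hDP P).1 hEf hφc hφord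
      have hφordQ : ∀ x, C.HasOrderAt (fun y => f' y - h y) x (Ef x - DP Q x) := by
        intro x; rw [← hPQ]; exact hφord x
      have hmaxQ := C.maxPrinciple (hDP Q).1 hEf hφc hφordQ
      have h1 := hmaxP Q
      have h2 := hmaxQ P
      linarith
    have k1 := key f hf
    have k2 := key g hg
    apply hsep
    linarith
  · -- injective → very ample
    intro hinj P Q hPQ
    obtain ⟨hp, hprat, hpord⟩ := (hDP P).2
    obtain ⟨hq, hqrat, hqord⟩ := (hDP Q).2
    have hPeff : C.Effective (DP P) := C.reduced_effective hD (hDP P).1 (hDP P).2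
    have hQeff : C.Effective (DP Q) := C.reduced_effective hD (hDP Q).1 (hDP Q).2
    refine ⟨hp, hq, ⟨hprat, DP P, hPeff, hpord⟩, ⟨hqrat, DP Q, hQeff, hqord⟩, ?_⟩
    intro hsep
    have hφord : ∀ x, C.HasOrderAt (fun y => hp y - hq y) x (DP P x - DP Q x) := by
      intro x
      have hsub := C.hasOrderAt_sub (hpord x) (hqord x)
      have heq : (DP P x - D x) - (DP Q x - D x) = DP P x - DP Q x := by ring
      rwa [heq] at hsub
    have hφordrev : ∀ x, C.HasOrderAt (fun y => hq y - hp y) x (DP Q x - DP P x) := by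
      intro x
      have hsub := C.hasOrderAt_sub (hqord x) (hpord x)
      have heq : (DP Q x - D x) - (DP P x - D x) = DP Q x - DP P x := by ring
      rwa [heq] at hsub
    have hmax := C.maxPrinciple (hDP Q).1 hPeff (hprat.1.sub hqrat.1) hφord
    have hmin := C.maxPrinciple (hDP P).1 hQeff (hqrat.1.sub hprat.1) hφordrev
    have hconst : ∀ y, hp y - hq y = hp P - hq P := by
      intro y
      have h1 := hmax y
      have h2 := hmin y
      simp only [Pi.sub_apply] at h1 h2
      linarith
    have hz : ∀ x, C.HasOrderAt (fun y => hp y - hq y) x 0 :=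
      fun x => C.hasOrderAt_of_const hconst x
    have heq0 : ∀ x, DP P x - DP Q x = 0 :=
      fun x => C.hasOrderAt_unique (hφord x) (hz x)
    have hDPeq : DP P = DP Q := Finsupp.ext fun x => by have := heq0 x; omega
    exact hPQ (hinj hDPeq)
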